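/- The angular momentum integrals are in involution: for 2 ≤ m < m' ≤ N, {C^{(m)}, C^{(m')}} = 0, where C^{(m)}(q,p) = ∑_{1 ≤ i < j ≤ m} (qᵢpⱼ − qⱼpᵢ)². -/

import Mathlib

open Filter Topology

noncomputable def pbracket {N : ℕ} (F G : (Fin N → ℝ) → (Fin N → ℝ) → ℝ)
    (q p : Fin N → ℝ) : ℝ :=
  ∑ k, (deriv (fun t => F (Function.update q k t) p) (q k)
          * deriv (fun t => G q (Function.update p k t)) (p k)
        - deriv (fun t => F q (Function.update p k t)) (p k)
          * deriv (fun t => G (Function.update q k t) p) (q k))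

section Aux

variable {N : ℕ}

private lemma update_hasDerivAt (q : Fin N → ℝ) (k i : Fin N) :
    HasDerivAt (fun t => Function.update q k t i) (if i = k then 1 else 0) (q k) := by
  by_cases h : i = k
  · subst h
    simp only [Function.update_self, if_pos rfl]
    exact hasDerivAt_id' _
  · simp only [Function.update_of_ne h, if_neg h]
    exact hasDerivAt_const _ _

private lemma deriv_q (m : ℕ) (q p : Fin N → ℝ) (k : Fin N) :
    deriv (fun t => ∑ i : Fin N, ∑ j : Fin N,
      if (i : ℕ) < (j : ℕ) ∧ (j : ℕ) < m then
        (Function.update q k t i * p j - Function.update q k t j * p i) ^ 2 else 0) (q k)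
    = ∑ i : Fin N, ∑ j : Fin N, if (i : ℕ) < (j : ℕ) ∧ (j : ℕ) < m then
        2 * (q i * p j - q j * p i) * ((if i = k then p j else 0) - (if j = k then p i else 0))
      else 0 := by
  apply HasDerivAt.deriv
  apply HasDerivAt.fun_sum
  intro i _
  apply HasDerivAt.fun_sum
  intro j _
  by_cases hc : (i : ℕ) < (j : ℕ) ∧ (j : ℕ) < m
  · simp only [if_pos hc]
    have h := (((update_hasDerivAt q k i).mul_const (p j)).fun_sub
      ((update_hasDerivAt q k j).mul_const (p i))).fun_pow 2
    convert h using 1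
    on_goal 1 => rfl
    simp only [Function.update_eq_self, pow_one, Nat.cast_ofNat]
    split_ifs <;> ring
  · simp only [if_neg hc]
    exact hasDerivAt_const _ _

private lemma deriv_p (m : ℕ) (q p : Fin N → ℝ) (k : Fin N) :
    deriv (fun t => ∑ i : Fin N, ∑ j : Fin N,
      if (i : ℕ) < (j : ℕ) ∧ (j : ℕ) < m then
        (q i * Function.update p k t j - q j * Function.update p k t i) ^ 2 else 0) (p k)
    = ∑ i : Fin N, ∑ j : Fin N, if (i : ℕ) < (j : ℕ) ∧ (j : ℕ) < m then
        2 * (q i * p j - q j * p i) * ((if j = k then q i else 0) - (if i = k then q j else 0))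
      else 0 := by
  apply HasDerivAt.deriv
  apply HasDerivAt.fun_sum
  intro i _
  apply HasDerivAt.fun_sum
  intro j _
  by_cases hc : (i : ℕ) < (j : ℕ) ∧ (j : ℕ) < m
  · simp only [if_pos hc]
    have h := (((update_hasDerivAt p k j).const_mul (q i)).fun_sub
      ((update_hasDerivAt p k i).const_mul (q j))).fun_pow 2
    convert h using 1
    on_goal 1 => rfl
    simp only [Function.update_eq_self, pow_one, Nat.cast_ofNat]
    split_ifs <;> ring
  · simp only [if_neg hc]
    exact hasDerivAt_const _ _

private lemma collapse_q (m : ℕ) (q p : Fin N → ℝ) (k : Fin N) :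
    (∑ i : Fin N, ∑ j : Fin N, if (i : ℕ) < (j : ℕ) ∧ (j : ℕ) < m then
        2 * (q i * p j - q j * p i) * ((if i = k then p j else 0) - (if j = k then p i else 0))
      else 0)
    = ∑ j : Fin N, if (k : ℕ) < m ∧ (j : ℕ) < m then
        2 * (q k * p j - q j * p k) * p j else 0 := by
  have step : ∀ i j : Fin N,
      (if (i : ℕ) < (j : ℕ) ∧ (j : ℕ) < m then
        2 * (q i * p j - q j * p i) * ((if i = k then p j else 0) - (if j = k then p i else 0))
      else 0)
      = (if i = k then (if (i : ℕ) < (j : ℕ) ∧ (j : ℕ) < m then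
            2 * (q i * p j - q j * p i) * p j else 0) else 0)
        - (if j = k then (if (i : ℕ) < (j : ℕ) ∧ (j : ℕ) < m then
            2 * (q i * p j - q j * p i) * p i else 0) else 0) := by
    intro i j
    split_ifs <;> ring
  simp only [step, Finset.sum_sub_distrib]
  rw [Finset.sum_comm (f := fun (i j : Fin N) => if j = k then (if (i : ℕ) < (j : ℕ) ∧ (j : ℕ) < m then
            2 * (q i * p j - q j * p i) * p i else 0) else 0)]
  simp only [Finset.sum_ite_irrel, Finset.sum_const_zero, Finset.sum_ite_eq', Finset.mem_univ, if_true]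
  rw [← Finset.sum_sub_distrib]
  apply Finset.sum_congr rfl
  intro j _
  split_ifs <;>
    first
      | (exfalso; omega)
      | ring1
      | (have hjk : j = k := Fin.ext (by omega); subst hjk; ring1)

private lemma collapse_p (m : ℕ) (q p : Fin N → ℝ) (k : Fin N) :
    (∑ i : Fin N, ∑ j : Fin N, if (i : ℕ) < (j : ℕ) ∧ (j : ℕ) < m then
        2 * (q i * p j - q j * p i) * ((if j = k then q i else 0) - (if i = k then q j else 0))
      else 0)
    = ∑ j : Fin N, if (k : ℕ) < m ∧ (j : ℕ) < m then
        -(2 * (q k * p j - q j * p k) * q j) else 0 := by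
  have step : ∀ i j : Fin N,
      (if (i : ℕ) < (j : ℕ) ∧ (j : ℕ) < m then
        2 * (q i * p j - q j * p i) * ((if j = k then q i else 0) - (if i = k then q j else 0))
      else 0)
      = (if j = k then (if (i : ℕ) < (j : ℕ) ∧ (j : ℕ) < m then
            2 * (q i * p j - q j * p i) * q i else 0) else 0)
        - (if i = k then (if (i : ℕ) < (j : ℕ) ∧ (j : ℕ) < m then
            2 * (q i * p j - q j * p i) * q j else 0) else 0) := by
    intro i j
    split_ifs <;> ring
  simp only [step, Finset.sum_sub_distrib]
  rw [Finset.sum_comm (f := fun (i j : Fin N) => if j = k then (if (i : ℕ) < (j : ℕ) ∧ (j : ℕ) < m then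
            2 * (q i * p j - q j * p i) * q i else 0) else 0)]
  simp only [Finset.sum_ite_irrel, Finset.sum_const_zero, Finset.sum_ite_eq', Finset.mem_univ, if_true]
  rw [← Finset.sum_sub_distrib]
  apply Finset.sum_congr rfl
  intro j _
  split_ifs <;>
    first
      | (exfalso; omega)
      | ring1
      | (have hjk : j = k := Fin.ext (by omega); subst hjk; ring1)

private lemma sum_antisym {f : Fin N → Fin N → Fin N → ℝ}
    (h : ∀ k j l, f k j l = - f j k l) :
    ∑ k : Fin N, ∑ j : Fin N, ∑ l : Fin N, f k j l = 0 := by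
  have h2 : ∑ k : Fin N, ∑ j : Fin N, ∑ l : Fin N, f k j l
      = ∑ j : Fin N, ∑ k : Fin N, ∑ l : Fin N, f k j l := Finset.sum_comm
  have h3 : ∑ j : Fin N, ∑ k : Fin N, ∑ l : Fin N, f k j l
      = - ∑ k : Fin N, ∑ j : Fin N, ∑ l : Fin N, f k j l := by
    simp only [← Finset.sum_neg_distrib]
    apply Finset.sum_congr rfl; intro j _
    apply Finset.sum_congr rfl; intro k _
    apply Finset.sum_congr rfl; intro l _
    rw [h]
  linarith [h2, h3]

end Aux

theorem stmt_5 {N : ℕ} (m m' : ℕ) (hm2 : 2 ≤ m) (hmm : m < m') (hm'N : m' ≤ N)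
    (q p : Fin N → ℝ) :
    pbracket
      (fun q p => ∑ i : Fin N, ∑ j : Fin N,
        if (i : ℕ) < (j : ℕ) ∧ (j : ℕ) < m then (q i * p j - q j * p i) ^ 2 else 0)
      (fun q p => ∑ i : Fin N, ∑ j : Fin N,
        if (i : ℕ) < (j : ℕ) ∧ (j : ℕ) < m' then (q i * p j - q j * p i) ^ 2 else 0)
      q p = 0 := by
  simp only [pbracket]
  simp only [deriv_q, deriv_p, collapse_q, collapse_p]
  have key : ∀ k : Fin N,
      (∑ j : Fin N, if (k : ℕ) < m ∧ (j : ℕ) < m then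
          2 * (q k * p j - q j * p k) * p j else 0)
      * (∑ l : Fin N, if (k : ℕ) < m' ∧ (l : ℕ) < m' then
          -(2 * (q k * p l - q l * p k) * q l) else 0)
      - (∑ j : Fin N, if (k : ℕ) < m ∧ (j : ℕ) < m then
          -(2 * (q k * p j - q j * p k) * q j) else 0)
      * (∑ l : Fin N, if (k : ℕ) < m' ∧ (l : ℕ) < m' then
          2 * (q k * p l - q l * p k) * p l else 0)
      = ∑ j : Fin N, ∑ l : Fin N,
          (if (k : ℕ) < m ∧ (j : ℕ) < m then
            (if (k : ℕ) < m' ∧ (l : ℕ) < m' then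
              4 * (q k * p j - q j * p k) * (q k * p l - q l * p k) * (q j * p l - q l * p j)
            else 0) else 0) := by
    intro k
    rw [Finset.sum_mul_sum, Finset.sum_mul_sum, ← Finset.sum_sub_distrib]
    apply Finset.sum_congr rfl
    intro j _
    rw [← Finset.sum_sub_distrib]
    apply Finset.sum_congr rfl
    intro l _
    split_ifs <;> ring
  simp only [key]
  apply sum_antisym
  intro k j l
  split_ifs <;> first | (exfalso; omega) | ring1
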